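/- arXiv:2411.02356 — 4 statements merged into one kernel-verified Lean document; each statement's English description precedes it below -/
import Mathlib

section
/- Let H : ℝ → ℝ be continuous, convex, and coercive, and let μ̂ be a minimizer of H. Define H⁻(μ) = H(μ) for μ ≤ μ̂ and H⁻(μ) = H(μ̂) for μ > μ̂. Then H⁻ is nonincreasing, convex, continuous, and satisfies H⁻ ≤ H with H⁻(μ) = max over λ ≤ 0 of (λμ - L(λ)), where L(λ) = sup_μ (λμ - H(μ)). -/
/-- Properties of the nonincreasing truncation `H⁻` of a continuous, convex,
superlinearly coercive Hamiltonian at a minimizer. -/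
theorem stmt_6 (H : ℝ → ℝ) (hcont : Continuous H)
    (hconv : ConvexOn ℝ Set.univ H)
    (hcoer : Filter.Tendsto (fun μ => H μ / |μ|) (Filter.cocompact ℝ) Filter.atTop)
    (μh : ℝ) (hμh : ∀ μ : ℝ, H μh ≤ H μ)
    (Hm : ℝ → ℝ) (hHm : ∀ μ : ℝ, Hm μ = if μ ≤ μh then H μ else H μh)
    (L : ℝ → ℝ)
    (hL : ∀ l : ℝ, IsLUB {y | ∃ μ : ℝ, y = l * μ - H μ} (L l)) :
    Antitone Hm ∧ ConvexOn ℝ Set.univ Hm ∧ Continuous Hm ∧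
    (∀ μ : ℝ, Hm μ ≤ H μ) ∧
    (∀ μ : ℝ, IsGreatest {y | ∃ l ≤ (0 : ℝ), y = l * μ - L l} (Hm μ)) := by
  have hmin : ∀ μ, Hm μ = H (min μ μh) := by
    intro μ; rw [hHm]
    rcases le_or_gt μ μh with h | h
    · rw [if_pos h, min_eq_left h]
    · rw [if_neg (not_le.mpr h), min_eq_right h.le]
  -- L 0 = -H μh
  have hL0 : L 0 = -H μh := by
    refine (hL 0).unique (IsGreatest.isLUB ?_)
    constructor
    · exact ⟨μh, by ring⟩
    · rintro y ⟨ν, rfl⟩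
      have := hμh ν; linarith
  -- existence of a nonpositive subgradient at each μ ≤ μh
  have hsub : ∀ μ ≤ μh, ∃ l ≤ (0:ℝ), ∀ s, l * s - H s ≤ l * μ - H μ := by
    intro μ hμ
    rcases eq_or_lt_of_le hμ with rfl | hlt
    · refine ⟨0, le_refl 0, fun s => ?_⟩
      have := hμh s; linarith
    · set S : Set ℝ := (fun t => (H μ - H t) / (μ - t)) '' Set.Iio μ with hS
      have hne : S.Nonempty := ⟨_, ⟨μ - 1, by simp, rfl⟩⟩
      have hslope_eq : ∀ t : ℝ, (H μ - H t) / (μ - t) = (H t - H μ) / (t - μ) := by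
        intro t
        rw [← neg_sub (H t), ← neg_sub t, neg_div_neg_eq]
      have hbdd : ∀ y ∈ S, y ≤ (H μh - H μ) / (μh - μ) := by
        rintro y ⟨t, ht, rfl⟩
        show (H μ - H t) / (μ - t) ≤ _
        rw [hslope_eq]
        exact hconv.secant_mono (Set.mem_univ μ) (Set.mem_univ t) (Set.mem_univ μh)
          (ne_of_lt ht) (ne_of_gt hlt) (le_of_lt (ht.trans hlt))
      have hBdd : BddAbove S := ⟨_, hbdd⟩
      set l := sSup S with hl
      have hl_le : l ≤ (H μh - H μ) / (μh - μ) := csSup_le hne hbdd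
      have hl0 : l ≤ 0 := by
        refine hl_le.trans (div_nonpos_of_nonpos_of_nonneg ?_ ?_)
        · linarith [hμh μ]
        · linarith
      refine ⟨l, hl0, fun s => ?_⟩
      rcases lt_trichotomy s μ with hs | rfl | hs
      · -- s < μ : slope(μ,s) ∈ S so slope ≤ l
        have hmem : (H μ - H s) / (μ - s) ≤ l := le_csSup hBdd ⟨s, hs, rfl⟩
        have hpos : (0:ℝ) < μ - s := by linarith
        have := (div_le_iff₀ hpos).mp hmem
        nlinarith
      · linarith
      · -- s > μ : l ≤ slope(μ,s)
        have hub : l ≤ (H s - H μ) / (s - μ) := by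
          refine csSup_le hne ?_
          rintro y ⟨t, ht, rfl⟩
          show (H μ - H t) / (μ - t) ≤ _
          rw [hslope_eq]
          exact hconv.secant_mono (Set.mem_univ μ) (Set.mem_univ t) (Set.mem_univ s)
            (ne_of_lt ht) (ne_of_gt hs) (le_of_lt (ht.trans hs))
        have hpos : (0:ℝ) < s - μ := by linarith
        have := (le_div_iff₀ hpos).mp hub
        nlinarith
  -- the key IsGreatest property
  have hkey : ∀ μ : ℝ, IsGreatest {y | ∃ l ≤ (0 : ℝ), y = l * μ - L l} (Hm μ) := by
    intro μ
    constructor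
    · rcases le_or_gt μ μh with h | h
      · obtain ⟨l, hl0, hsg⟩ := hsub μ h
        have hLl : L l = l * μ - H μ := by
          refine (hL l).unique (IsGreatest.isLUB ⟨⟨μ, rfl⟩, ?_⟩)
          rintro y ⟨s, rfl⟩
          exact hsg s
        exact ⟨l, hl0, by rw [hHm, if_pos h, hLl]; ring⟩
      · exact ⟨0, le_refl 0, by rw [hHm, if_neg (not_le.mpr h), hL0]; ring⟩
    · rintro y ⟨l, hl0, rfl⟩
      have h1 : l * (min μ μh) - H (min μ μh) ≤ L l := (hL l).1 ⟨min μ μh, rfl⟩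
      have h2 : l * (μ - min μ μh) ≤ 0 :=
        mul_nonpos_of_nonpos_of_nonneg hl0 (sub_nonneg.mpr (min_le_left μ μh))
      rw [hmin μ]
      rw [mul_sub] at h2
      linarith
  refine ⟨?_, ?_, ?_, ?_, hkey⟩
  · -- Antitone
    intro a b hab
    obtain ⟨l, hl0, he⟩ := (hkey b).1
    have h1 : l * a - L l ≤ Hm a := (hkey a).2 ⟨l, hl0, rfl⟩
    have h2 : l * b ≤ l * a := mul_le_mul_of_nonpos_left hab hl0
    rw [he]; linarith
  · -- ConvexOn
    refine ⟨convex_univ, ?_⟩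
    intro x _ y _ a b ha hb hab
    obtain ⟨l, hl0, he⟩ := (hkey (a • x + b • y)).1
    have hx : l * x - L l ≤ Hm x := (hkey x).2 ⟨l, hl0, rfl⟩
    have hy : l * y - L l ≤ Hm y := (hkey y).2 ⟨l, hl0, rfl⟩
    have h1 : a * (l * x - L l) ≤ a * Hm x := mul_le_mul_of_nonneg_left hx ha
    have h2 : b * (l * y - L l) ≤ b * Hm y := mul_le_mul_of_nonneg_left hy hb
    simp only [smul_eq_mul] at he ⊢
    have h3 : l * (a * x + b * y) - L l = a * (l * x - L l) + b * (l * y - L l) := by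
      linear_combination (L l) * hab
    rw [he, h3]; linarith
  · -- Continuous
    have : Hm = fun μ => H (min μ μh) := funext hmin
    rw [this]
    exact hcont.comp (continuous_id.min continuous_const)
  · -- Hm ≤ H
    intro μ
    rw [hHm]
    split_ifs with h
    · exact le_refl _
    · exact hμh μ
end

section
/- Under the above definition of S, if f is ℓ-Lipschitz on the partition points (hence its interpolant I[f] is ℓ-Lipschitz), and L(s, λ) = +∞ for |λ| > β₀ while |L(s, λ)| ≤ M for |λ| ≤ β₀, then for each partition point s, |S[f](s) - f(s)| ≤ (ℓ·β₀ + M)·Δt. -/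
/-- Stability estimate for one step of the semi-Lagrangian operator applied to
a Lipschitz datum. -/
theorem stmt_10 (L₀ Δt β₀ ℓ M : ℝ) (hL₀ : 0 < L₀) (hΔt : 0 < Δt) (hβ₀ : 0 < β₀)
    (hℓ : 0 < ℓ) (hM : 0 < M) (hΔtL : Δt ≤ L₀ / β₀)
    (f If : ℝ → ℝ) (p : ℝ) (hp : p ∈ Set.Icc (0 : ℝ) L₀)
    (hIfp : If p = f p)
    (hIfLip : ∀ x ∈ Set.Icc (0 : ℝ) L₀, ∀ y ∈ Set.Icc (0 : ℝ) L₀,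
      |If x - If y| ≤ ℓ * |x - y|)
    (Lag : ℝ → ℝ) (hLagM : ∀ l : ℝ, |l| ≤ β₀ → |Lag l| ≤ M)
    (Sf : ℝ)
    (hSf : IsLeast {y | ∃ l : ℝ, l ∈ Set.Icc ((p - L₀) / Δt) (p / Δt) ∧ |l| ≤ β₀ ∧
      y = If (p - Δt * l) + Δt * Lag l} Sf) :
    |Sf - f p| ≤ (ℓ * β₀ + M) * Δt := by
  obtain ⟨hp0, hpL⟩ := hp
  obtain ⟨⟨l, ⟨hl1, hl2⟩, hlβ, hSeq⟩, hLB⟩ := hSf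
  -- Upper bound: λ = 0 is admissible
  have hupper : Sf ≤ f p + Δt * Lag 0 := by
    have := hLB ⟨0, ⟨div_nonpos_of_nonpos_of_nonneg (by linarith) hΔt.le,
      div_nonneg hp0 hΔt.le⟩, by simp [hβ₀.le], rfl⟩
    simpa [hIfp] using this
  -- Lower bound: via Lipschitz at the witness l
  have hfeas : p - Δt * l ∈ Set.Icc (0 : ℝ) L₀ := by
    constructor
    · have := (le_div_iff₀ hΔt).mp hl2; nlinarith
    · have := (div_le_iff₀ hΔt).mp hl1; nlinarith
  have hLip := hIfLip _ hfeas p ⟨hp0, hpL⟩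
  have habsl : |Δt * l| ≤ Δt * β₀ := by
    rw [abs_mul, abs_of_pos hΔt]
    exact mul_le_mul_of_nonneg_left hlβ hΔt.le
  have h1 : |If (p - Δt * l) - f p| ≤ ℓ * (Δt * β₀) := by
    rw [← hIfp]
    calc |If (p - Δt * l) - If p| ≤ ℓ * |p - Δt * l - p| := hLip
    _ ≤ ℓ * (Δt * β₀) := by
        apply mul_le_mul_of_nonneg_left _ hℓ.le
        simpa [abs_sub_comm] using habsl
  have h2 : |Δt * Lag l| ≤ Δt * M := by
    rw [abs_mul, abs_of_pos hΔt]
    exact mul_le_mul_of_nonneg_left (hLagM l hlβ) hΔt.le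
  have h3 : |Lag 0| ≤ M := hLagM 0 (by simp [hβ₀.le])
  rw [abs_sub_le_iff]
  constructor
  · have : |Δt * Lag 0| ≤ Δt * M := by
      rw [abs_mul, abs_of_pos hΔt]
      exact mul_le_mul_of_nonneg_left h3 hΔt.le
    have := abs_le.mp this
    nlinarith [mul_pos (mul_pos hℓ hβ₀) hΔt]
  · have ha := abs_le.mp h1
    have hb := abs_le.mp h2
    rw [hSeq] at *
    nlinarith
end

section
/- Let φ : [0, L₀] → ℝ be C² with ‖φ''‖_∞ ≤ M, let H(s, μ) = max over |λ| ≤ β₀ of (λμ - L(s, λ)), and suppose Δt ≤ Δx/β₀ where Δx is the minimal spacing of the partition, and s is an interior partition point (so [-β₀, β₀] ⊆ [(s - L₀)/Δt, s/Δt]). Then |(φ(s) - S[φ](s))/Δt - H(s, φ'(s))| ≤ C₀ · M · min{Δx, Δx²/Δt}, where C₀ is an absolute constant and S[φ](s) = min over λ in [(s-L₀)/Δt, s/Δt] of (I[φ](s - Δt·λ) + Δt·L(s, λ)). -/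
/-- Consistency estimate for the semi-Lagrangian operator at an interior grid
point, under the time step restriction `Δt ≤ Δx / β₀`. -/
theorem stmt_11 (L₀ β₀ : ℝ) (hL₀ : 0 < L₀) (hβ₀ : 0 < β₀) :
    ∃ C₀ > (0 : ℝ), ∀ (Δx Δt M : ℝ) (φ φ' φ'' Iφ : ℝ → ℝ) (Lag : ℝ → ℝ)
      (p Hval Sval : ℝ),
      0 < Δx → 0 < Δt → 0 ≤ M →
      Δt ≤ Δx / β₀ →
      p ∈ Set.Icc (β₀ * Δt) (L₀ - β₀ * Δt) →
      (∀ x ∈ Set.Icc (0 : ℝ) L₀, HasDerivWithinAt φ (φ' x) (Set.Icc (0 : ℝ) L₀) x) →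
      (∀ x ∈ Set.Icc (0 : ℝ) L₀, HasDerivWithinAt φ' (φ'' x) (Set.Icc (0 : ℝ) L₀) x) →
      (∀ x ∈ Set.Icc (0 : ℝ) L₀, |φ'' x| ≤ M) →
      (∀ y ∈ Set.Icc (p - β₀ * Δt) (p + β₀ * Δt),
        |Iφ y - φ y| ≤ (1 / 8) * M * min (Δx * Δt * β₀) (Δx ^ 2)) →
      IsGreatest {y | ∃ l ∈ Set.Icc (-β₀) β₀, y = l * φ' p - Lag l} Hval →
      IsLeast {y | ∃ l : ℝ, l ∈ Set.Icc ((p - L₀) / Δt) (p / Δt) ∧ |l| ≤ β₀ ∧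
        y = Iφ (p - Δt * l) + Δt * Lag l} Sval →
      |(φ p - Sval) / Δt - Hval| ≤ C₀ * M * min Δx (Δx ^ 2 / Δt) := by
  refine ⟨2 * (β₀ + 1), by positivity, ?_⟩
  intro Δx Δt M φ φ' φ'' Iφ Lag p Hval Sval hΔx hΔt hM hcfl hp hφ hφ' hφ'' hI hH hS
  obtain ⟨hp1, hp2⟩ := hp
  have hβΔ : β₀ * Δt ≤ Δx := by
    have := (le_div_iff₀ hβ₀).mp hcfl
    linarith
  have hβΔpos : 0 < β₀ * Δt := by positivity
  -- the local interval around p sits inside [0, L₀]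
  have hsub : Set.Icc (p - β₀ * Δt) (p + β₀ * Δt) ⊆ Set.Icc (0 : ℝ) L₀ := by
    intro x hx
    obtain ⟨h1, h2⟩ := hx
    constructor <;> nlinarith
  have hconv : Convex ℝ (Set.Icc (p - β₀ * Δt) (p + β₀ * Δt)) := convex_Icc _ _
  have hpmem : p ∈ Set.Icc (p - β₀ * Δt) (p + β₀ * Δt) := by
    constructor <;> nlinarith
  -- Lipschitz bound on φ' near p
  have hφ'lip : ∀ x ∈ Set.Icc (p - β₀ * Δt) (p + β₀ * Δt),
      |φ' x - φ' p| ≤ M * (β₀ * Δt) := by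
    intro x hx
    have h := Convex.norm_image_sub_le_of_norm_hasDerivWithin_le
      (f := φ') (f' := φ'') (s := Set.Icc (p - β₀ * Δt) (p + β₀ * Δt)) (C := M)
      (fun z hz => (hφ' z (hsub hz)).mono hsub)
      (fun z hz => by simpa [Real.norm_eq_abs] using hφ'' z (hsub hz))
      hconv hpmem hx
    rw [Real.norm_eq_abs, Real.norm_eq_abs] at h
    refine h.trans ?_
    have : |x - p| ≤ β₀ * Δt := by
      rw [abs_le]; obtain ⟨h1, h2⟩ := hx; constructor <;> linarith
    nlinarith [abs_nonneg (x - p)]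
  -- Taylor type bound
  have hTaylor : ∀ x ∈ Set.Icc (p - β₀ * Δt) (p + β₀ * Δt),
      |φ x - φ p - (x - p) * φ' p| ≤ M * (β₀ * Δt) * (β₀ * Δt) := by
    intro x hx
    have h := Convex.norm_image_sub_le_of_norm_hasDerivWithin_le
      (f := fun z => φ z - z * φ' p) (f' := fun z => φ' z - φ' p)
      (s := Set.Icc (p - β₀ * Δt) (p + β₀ * Δt)) (C := M * (β₀ * Δt))
      (fun z hz => by
        have h1 := (hφ z (hsub hz)).mono hsub
        have h2 : HasDerivWithinAt (fun z : ℝ => z * φ' p) (φ' p)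
            (Set.Icc (p - β₀ * Δt) (p + β₀ * Δt)) z := by
          simpa using (hasDerivWithinAt_id z _).mul_const (φ' p)
        exact h1.sub h2)
      (fun z hz => by simpa [Real.norm_eq_abs] using hφ'lip z hz)
      hconv hpmem hx
    rw [Real.norm_eq_abs, Real.norm_eq_abs] at h
    have hx' : |x - p| ≤ β₀ * Δt := by
      rw [abs_le]; obtain ⟨h1, h2⟩ := hx; constructor <;> linarith
    have : |φ x - φ p - (x - p) * φ' p| ≤ M * (β₀ * Δt) * |x - p| := by
      have heq : φ x - x * φ' p - (φ p - p * φ' p) = φ x - φ p - (x - p) * φ' p := by ring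
      rw [heq] at h
      exact h
    have hmul : M * (β₀ * Δt) * |x - p| ≤ M * (β₀ * Δt) * (β₀ * Δt) :=
      mul_le_mul_of_nonneg_left hx' (by positivity)
    linarith
  obtain ⟨m, hm⟩ : ∃ m : ℝ, m = min Δx (Δx ^ 2 / Δt) := ⟨_, rfl⟩
  rw [show min Δx (Δx ^ 2 / Δt) = m from hm.symm]
  have hmpos : 0 < m := by rw [hm]; exact lt_min hΔx (by positivity)
  -- key per-λ estimate
  have key : ∀ l : ℝ, |l| ≤ β₀ →
      |(φ p - Iφ (p - Δt * l)) / Δt - l * φ' p| ≤ 2 * (β₀ + 1) * M * m := by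
    intro l hl
    set q := p - Δt * l with hq
    have hqmem : q ∈ Set.Icc (p - β₀ * Δt) (p + β₀ * Δt) := by
      have h1 : |Δt * l| ≤ β₀ * Δt := by
        rw [abs_mul, abs_of_pos hΔt]
        nlinarith [abs_nonneg l]
      rw [abs_le] at h1
      constructor <;> (simp only [hq]; linarith [h1.1, h1.2])
    have hT := hTaylor q hqmem
    have hIb := hI q hqmem
    -- rewrite the quantity
    have heq : (φ p - Iφ q) / Δt - l * φ' p =
        (-(φ q - φ p - (q - p) * φ' p) + (φ q - Iφ q)) / Δt := by
      rw [hq]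
      field_simp
      ring
    rw [heq]
    rw [abs_div, abs_of_pos hΔt, div_le_iff₀ hΔt]
    have habs : |-(φ q - φ p - (q - p) * φ' p) + (φ q - Iφ q)| ≤
        M * (β₀ * Δt) * (β₀ * Δt) + (1 / 8) * M * min (Δx * Δt * β₀) (Δx ^ 2) := by
      calc |-(φ q - φ p - (q - p) * φ' p) + (φ q - Iφ q)|
          ≤ |-(φ q - φ p - (q - p) * φ' p)| + |φ q - Iφ q| := abs_add_le _ _
        _ = |φ q - φ p - (q - p) * φ' p| + |Iφ q - φ q| := by
            rw [abs_neg, abs_sub_comm (φ q) (Iφ q)]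
        _ ≤ _ := add_le_add hT hIb
    refine habs.trans ?_
    -- now pure arithmetic
    have h1 : M * (β₀ * Δt) * (β₀ * Δt) ≤ (β₀ + 1) * M * m * Δt := by
      rcases le_total Δx (Δx ^ 2 / Δt) with hc | hc
      · have hmx : m = Δx := hm.trans (min_eq_left hc)
        rw [hmx]
        calc M * (β₀ * Δt) * (β₀ * Δt) ≤ M * (β₀ * Δt) * Δx :=
              mul_le_mul_of_nonneg_left hβΔ (by positivity)
          _ = β₀ * (M * Δx * Δt) := by ring
          _ ≤ (β₀ + 1) * (M * Δx * Δt) :=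
              mul_le_mul_of_nonneg_right (by linarith) (by positivity)
          _ = (β₀ + 1) * M * Δx * Δt := by ring
      · have hmx : m = Δx ^ 2 / Δt := hm.trans (min_eq_right hc)
        rw [hmx]
        have hd : (β₀ + 1) * M * (Δx ^ 2 / Δt) * Δt = (β₀ + 1) * M * Δx ^ 2 := by
          field_simp
        rw [hd]
        have hsq : β₀ * Δt * (β₀ * Δt) ≤ Δx * Δx :=
          mul_self_le_mul_self hβΔpos.le hβΔ
        calc M * (β₀ * Δt) * (β₀ * Δt) = M * (β₀ * Δt * (β₀ * Δt)) := by ring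
          _ ≤ M * (Δx * Δx) := mul_le_mul_of_nonneg_left hsq hM
          _ = 1 * (M * Δx ^ 2) := by ring
          _ ≤ (β₀ + 1) * (M * Δx ^ 2) :=
              mul_le_mul_of_nonneg_right (by linarith) (by positivity)
          _ = (β₀ + 1) * M * Δx ^ 2 := by ring
    have h2 : (1 / 8) * M * min (Δx * Δt * β₀) (Δx ^ 2) ≤ (β₀ + 1) * M * m * Δt := by
      rcases le_total Δx (Δx ^ 2 / Δt) with hc | hc
      · have hmx : m = Δx := hm.trans (min_eq_left hc)
        rw [hmx]
        have h3 : M * min (Δx * Δt * β₀) (Δx ^ 2) ≤ M * (Δx * Δt * β₀) :=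
          mul_le_mul_of_nonneg_left (min_le_left _ _) hM
        calc (1 / 8) * M * min (Δx * Δt * β₀) (Δx ^ 2)
            = (1 / 8) * (M * min (Δx * Δt * β₀) (Δx ^ 2)) := by ring
          _ ≤ (1 / 8) * (M * (Δx * Δt * β₀)) := by linarith
          _ = (1 / 8 * β₀) * (M * Δx * Δt) := by ring
          _ ≤ (β₀ + 1) * (M * Δx * Δt) :=
              mul_le_mul_of_nonneg_right (by linarith) (by positivity)
          _ = (β₀ + 1) * M * Δx * Δt := by ring
      · have hmx : m = Δx ^ 2 / Δt := hm.trans (min_eq_right hc)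
        rw [hmx]
        have hd : (β₀ + 1) * M * (Δx ^ 2 / Δt) * Δt = (β₀ + 1) * M * Δx ^ 2 := by
          field_simp
        rw [hd]
        have h3 : M * min (Δx * Δt * β₀) (Δx ^ 2) ≤ M * Δx ^ 2 :=
          mul_le_mul_of_nonneg_left (min_le_right _ _) hM
        calc (1 / 8) * M * min (Δx * Δt * β₀) (Δx ^ 2)
            = (1 / 8) * (M * min (Δx * Δt * β₀) (Δx ^ 2)) := by ring
          _ ≤ (1 / 8) * (M * Δx ^ 2) := by linarith
          _ ≤ (β₀ + 1) * (M * Δx ^ 2) :=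
              mul_le_mul_of_nonneg_right (by linarith) (by positivity)
          _ = (β₀ + 1) * M * Δx ^ 2 := by ring
    linarith
  -- extract witnesses
  obtain ⟨⟨l₀, ⟨hl₀I, hl₀abs, hl₀eq⟩⟩, hSlb⟩ := hS
  obtain ⟨⟨l₁, hl₁mem, hl₁eq⟩, hHub⟩ := hH
  have hl₁abs : |l₁| ≤ β₀ := abs_le.mpr ⟨hl₁mem.1, hl₁mem.2⟩
  rw [abs_sub_le_iff]
  constructor
  · -- (φ p - Sval)/Δt - Hval ≤ E using l₀
    have hHge : l₀ * φ' p - Lag l₀ ≤ Hval :=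
      hHub ⟨l₀, ⟨Set.mem_Icc.mpr (abs_le.mp hl₀abs), rfl⟩⟩
    have hk := key l₀ hl₀abs
    have hSe : (φ p - Sval) / Δt = (φ p - Iφ (p - Δt * l₀)) / Δt - Lag l₀ := by
      rw [hl₀eq]; field_simp; ring
    rw [hSe]
    have := (abs_le.mp hk).2
    linarith
  · -- Hval - (φ p - Sval)/Δt ≤ E using l₁
    have hl₁Icc : l₁ ∈ Set.Icc ((p - L₀) / Δt) (p / Δt) := by
      constructor
      · rw [div_le_iff₀ hΔt]; nlinarith [hl₁mem.1]
      · rw [le_div_iff₀ hΔt]; nlinarith [hl₁mem.2]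
    have hSle : Sval ≤ Iφ (p - Δt * l₁) + Δt * Lag l₁ :=
      hSlb ⟨l₁, hl₁Icc, hl₁abs, rfl⟩
    have hHle : Hval = l₁ * φ' p - Lag l₁ := hl₁eq
    have hk := key l₁ hl₁abs
    have hge : (φ p - Iφ (p - Δt * l₁)) / Δt - Lag l₁ ≤ (φ p - Sval) / Δt := by
      have h' := (div_le_div_iff_of_pos_right hΔt).mpr
        (show φ p - (Iφ (p - Δt * l₁) + Δt * Lag l₁) ≤ φ p - Sval by linarith)
      have heq2 : (φ p - (Iφ (p - Δt * l₁) + Δt * Lag l₁)) / Δt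
          = (φ p - Iφ (p - Δt * l₁)) / Δt - Lag l₁ := by field_simp; ring
      linarith [heq2 ▸ h']
    have := (abs_le.mp hk).1
    rw [hHle]
    linarith
end

section
/- For the one-sided consistency at a boundary point: with s = 0 a partition endpoint and Δt ≤ L₀/β₀, the operator S[φ](0) = min over λ ∈ [-L₀/Δt, 0] of (I[φ](-Δt·λ) + Δt·L(0, λ)) satisfies |(φ(0) - S[φ](0))/Δt - H⁻(0, φ'(0))| ≤ C₀·M·min{Δx, Δx²/Δt}, where H⁻(0, μ) = max over λ ∈ [-β₀, 0] of (λμ - L(0, λ)). -/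
/-- One-sided consistency estimate for the semi-Lagrangian operator at the
boundary point `s = 0`, with the truncated Hamiltonian `H⁻`. -/
theorem stmt_12 (L₀ β₀ : ℝ) (hL₀ : 0 < L₀) (hβ₀ : 0 < β₀) :
    ∃ C₀ > (0 : ℝ), ∀ (Δx Δt M : ℝ) (φ φ' φ'' Iφ : ℝ → ℝ) (Lag : ℝ → ℝ)
      (Hmval Sval : ℝ),
      0 < Δx → 0 < Δt → 0 ≤ M →
      Δt ≤ Δx / β₀ →
      Δt ≤ L₀ / β₀ →
      (∀ x ∈ Set.Icc (0 : ℝ) L₀, HasDerivWithinAt φ (φ' x) (Set.Icc (0 : ℝ) L₀) x) →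
      (∀ x ∈ Set.Icc (0 : ℝ) L₀, HasDerivWithinAt φ' (φ'' x) (Set.Icc (0 : ℝ) L₀) x) →
      (∀ x ∈ Set.Icc (0 : ℝ) L₀, |φ'' x| ≤ M) →
      (∀ y ∈ Set.Icc (0 : ℝ) (β₀ * Δt),
        |Iφ y - φ y| ≤ (1 / 8) * M * min (Δx * Δt * β₀) (Δx ^ 2)) →
      IsGreatest {y | ∃ l ∈ Set.Icc (-β₀) (0 : ℝ), y = l * φ' 0 - Lag l} Hmval →
      IsLeast {y | ∃ l : ℝ, l ∈ Set.Icc (-(L₀ / Δt)) (0 : ℝ) ∧ |l| ≤ β₀ ∧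
        y = Iφ (0 - Δt * l) + Δt * Lag l} Sval →
      |(φ 0 - Sval) / Δt - Hmval| ≤ C₀ * M * min Δx (Δx ^ 2 / Δt) := by
  refine ⟨2 * (β₀ + 1), by positivity, ?_⟩
  intro Δx Δt M φ φ' φ'' Iφ Lag Hmval Sval hΔx hΔt hM hΔtx hΔtL hdφ hdφ' hφ'' hIφ hH hS
  have hβΔt : 0 < β₀ * Δt := by positivity
  have hβL : β₀ * Δt ≤ L₀ := by
    rw [mul_comm]; exact (le_div_iff₀ hβ₀).mp hΔtL
  have hβx : β₀ * Δt ≤ Δx := by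
    rw [mul_comm]; exact (le_div_iff₀ hβ₀).mp hΔtx
  have hsub : Set.Icc (0:ℝ) (β₀ * Δt) ⊆ Set.Icc (0:ℝ) L₀ :=
    Set.Icc_subset_Icc le_rfl hβL
  have hconv : Convex ℝ (Set.Icc (0:ℝ) L₀) := convex_Icc _ _
  have h0mem : (0:ℝ) ∈ Set.Icc (0:ℝ) L₀ := ⟨le_rfl, hL₀.le⟩
  have hmΔ0 : (0:ℝ) ≤ min Δx (Δx ^ 2 / Δt) := le_min hΔx.le (by positivity)
  -- Lipschitz bound on φ'
  have hlip : ∀ x ∈ Set.Icc (0:ℝ) (β₀ * Δt), |φ' x - φ' 0| ≤ M * (β₀ * Δt) := by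
    intro x hx
    have h1 := hconv.norm_image_sub_le_of_norm_hasDerivWithin_le hdφ'
      (fun y hy => by simpa using hφ'' y hy) h0mem (hsub hx)
    rw [Real.norm_eq_abs, Real.norm_eq_abs, sub_zero] at h1
    calc |φ' x - φ' 0| ≤ M * |x| := h1
      _ ≤ M * (β₀ * Δt) := by
          apply mul_le_mul_of_nonneg_left _ hM
          rw [abs_of_nonneg hx.1]; exact hx.2
  -- Taylor bound
  have htaylor : ∀ y ∈ Set.Icc (0:ℝ) (β₀ * Δt),
      |φ y - φ 0 - y * φ' 0| ≤ M * (β₀ * Δt) * (β₀ * Δt) := by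
    intro y hy
    have hconv2 : Convex ℝ (Set.Icc (0:ℝ) (β₀ * Δt)) := convex_Icc _ _
    have hd : ∀ x ∈ Set.Icc (0:ℝ) (β₀ * Δt),
        HasDerivWithinAt (fun z => φ z - φ 0 - z * φ' 0) (φ' x - φ' 0)
          (Set.Icc (0:ℝ) (β₀ * Δt)) x := by
      intro x hx
      have h1 : HasDerivWithinAt (fun z => φ z - φ 0) (φ' x)
          (Set.Icc (0:ℝ) (β₀ * Δt)) x := ((hdφ x (hsub hx)).mono hsub).sub_const _
      have h2 : HasDerivWithinAt (fun z : ℝ => z * φ' 0) (φ' 0)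
          (Set.Icc (0:ℝ) (β₀ * Δt)) x := by
        simpa using (hasDerivWithinAt_id x (Set.Icc (0:ℝ) (β₀ * Δt))).mul_const (φ' 0)
      exact h1.sub h2
    have h0 : (0:ℝ) ∈ Set.Icc (0:ℝ) (β₀ * Δt) := ⟨le_rfl, hβΔt.le⟩
    have h3 := hconv2.norm_image_sub_le_of_norm_hasDerivWithin_le hd
      (fun x hx => by simpa using hlip x hx) h0 hy
    simp only [Real.norm_eq_abs, sub_zero, zero_mul, sub_self] at h3
    calc |φ y - φ 0 - y * φ' 0| ≤ M * (β₀ * Δt) * |y| := h3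
      _ ≤ M * (β₀ * Δt) * (β₀ * Δt) := by
          apply mul_le_mul_of_nonneg_left _ (by positivity)
          rw [abs_of_nonneg hy.1]; exact hy.2
  -- min facts
  have hmin1 : min (Δx * Δt * β₀) (Δx ^ 2) ≤ Δt * ((β₀ + 1) * min Δx (Δx ^ 2 / Δt)) := by
    rcases le_total Δx (Δx ^ 2 / Δt) with h | h
    · rw [min_eq_left h]
      calc min (Δx * Δt * β₀) (Δx ^ 2) ≤ Δx * Δt * β₀ := min_le_left _ _
        _ ≤ Δt * ((β₀ + 1) * Δx) := by nlinarith
    · rw [min_eq_right h]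
      have hq : Δt * (Δx ^ 2 / Δt) = Δx ^ 2 := by field_simp
      calc min (Δx * Δt * β₀) (Δx ^ 2) ≤ Δx ^ 2 := min_le_right _ _
        _ = Δt * (Δx ^ 2 / Δt) := hq.symm
        _ ≤ Δt * ((β₀ + 1) * (Δx ^ 2 / Δt)) := by nlinarith [div_nonneg (sq_nonneg Δx) hΔt.le]
  have hmin2 : M * (β₀ * Δt) * (β₀ * Δt) ≤ Δt * ((β₀ + 1) * (M * min Δx (Δx ^ 2 / Δt))) := by
    have hb : β₀ * (β₀ * Δt) ≤ (β₀ + 1) * min Δx (Δx ^ 2 / Δt) := by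
      rcases le_total Δx (Δx ^ 2 / Δt) with h | h
      · rw [min_eq_left h]; nlinarith
      · rw [min_eq_right h]
        have hq : Δt * (Δx ^ 2 / Δt) = Δx ^ 2 := by field_simp
        have h2 : (β₀ * Δt) * (β₀ * Δt) ≤ Δx ^ 2 := by nlinarith
        have h3 : β₀ * (β₀ * Δt) ≤ Δx ^ 2 / Δt := by
          rw [le_div_iff₀ hΔt]; nlinarith
        nlinarith [hmΔ0, min_le_right Δx (Δx ^ 2 / Δt)]
    calc M * (β₀ * Δt) * (β₀ * Δt) = Δt * (M * (β₀ * (β₀ * Δt))) := by ring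
      _ ≤ Δt * ((β₀ + 1) * (M * min Δx (Δx ^ 2 / Δt))) := by nlinarith [mul_le_mul_of_nonneg_left hb hM]
  -- per-λ estimate
  have key : ∀ l ∈ Set.Icc (-β₀) (0:ℝ),
      |(φ 0 - (Iφ (0 - Δt * l) + Δt * Lag l)) / Δt - (l * φ' 0 - Lag l)|
        ≤ 2 * (β₀ + 1) * M * min Δx (Δx ^ 2 / Δt) := by
    intro l hl
    have hy : (0 - Δt * l) ∈ Set.Icc (0:ℝ) (β₀ * Δt) := by
      constructor
      · nlinarith [hl.2]
      · nlinarith [hl.1]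
    have hIe := hIφ (0 - Δt * l) hy
    have hT := htaylor (0 - Δt * l) hy
    have heq : (φ 0 - (Iφ (0 - Δt * l) + Δt * Lag l)) / Δt - (l * φ' 0 - Lag l)
        = -((Iφ (0 - Δt * l) - φ (0 - Δt * l))
            + (φ (0 - Δt * l) - φ 0 - (0 - Δt * l) * φ' 0)) / Δt := by
      field_simp
      ring
    rw [heq, abs_div, abs_neg, abs_of_pos hΔt, div_le_iff₀ hΔt]
    have habs : |(Iφ (0 - Δt * l) - φ (0 - Δt * l))
          + (φ (0 - Δt * l) - φ 0 - (0 - Δt * l) * φ' 0)|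
        ≤ (1 / 8) * M * min (Δx * Δt * β₀) (Δx ^ 2) + M * (β₀ * Δt) * (β₀ * Δt) :=
      (abs_add_le _ _).trans (add_le_add hIe hT)
    have hmin1' : M * min (Δx * Δt * β₀) (Δx ^ 2)
        ≤ M * (Δt * ((β₀ + 1) * min Δx (Δx ^ 2 / Δt))) :=
      mul_le_mul_of_nonneg_left hmin1 hM
    nlinarith [mul_nonneg (mul_nonneg hM hΔt.le) (mul_nonneg (by linarith [hβ₀] : (0:ℝ) ≤ β₀ + 1) hmΔ0)]
  -- combine the extrema
  obtain ⟨⟨l₁, hl₁, hH1⟩, hHub⟩ := hH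
  obtain ⟨⟨l₂, hl₂m, hl₂a, hS1⟩, hSlb⟩ := hS
  have hβLdt : β₀ ≤ L₀ / Δt := (le_div_iff₀ hΔt).mpr (by linarith)
  have hl₂' : l₂ ∈ Set.Icc (-β₀) (0:ℝ) := ⟨(abs_le.mp hl₂a).1, hl₂m.2⟩
  have hmemS : ∀ l ∈ Set.Icc (-β₀) (0:ℝ),
      (Iφ (0 - Δt * l) + Δt * Lag l) ∈ {y | ∃ l : ℝ, l ∈ Set.Icc (-(L₀ / Δt)) (0:ℝ) ∧
        |l| ≤ β₀ ∧ y = Iφ (0 - Δt * l) + Δt * Lag l} := by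
    intro l hl
    exact ⟨l, ⟨by linarith [hl.1], hl.2⟩, abs_le.mpr ⟨hl.1, hl.2.trans hβ₀.le⟩, rfl⟩
  rw [abs_le]
  constructor
  · -- lower bound
    have k1 := key l₁ hl₁
    have hSle : Sval ≤ Iφ (0 - Δt * l₁) + Δt * Lag l₁ := hSlb (hmemS l₁ hl₁)
    have hdiv : (φ 0 - (Iφ (0 - Δt * l₁) + Δt * Lag l₁)) / Δt ≤ (φ 0 - Sval) / Δt :=
      (div_le_div_iff_of_pos_right hΔt).mpr (by linarith)
    rw [abs_le] at k1
    rw [hH1]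
    linarith [k1.1]
  · -- upper bound
    have k2 := key l₂ hl₂'
    rw [← hS1] at k2
    have hfle : l₂ * φ' 0 - Lag l₂ ≤ Hmval := hHub ⟨l₂, hl₂', rfl⟩
    rw [abs_le] at k2
    linarith [k2.2]
end
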